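/- Let g(t) = h(t)·Φ((b−t)/a) where h is nonconstant, nondecreasing, concave, and differentiable on [t₀, t₁], a > 0, b ∈ ℝ. If a·(1−Φ((t₀−b)/a))/φ((t₀−b)/a) ≤ h(t₀)/h'(t₀), then g is strictly decreasing on [t₀, t₁]. -/

import Mathlib

open Set MeasureTheory Real Filter Topology


/-- The density of the standard normal distribution. -/
noncomputable def stdGaussianPDF (x : ℝ) : ℝ :=
  (Real.sqrt (2 * Real.pi))⁻¹ * Real.exp (-(x ^ 2) / 2)

/-- The cumulative distribution function of the standard normal distribution. -/
noncomputable def stdGaussianCDF (x : ℝ) : ℝ :=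
  ∫ t in Set.Iic x, stdGaussianPDF t

lemma sgp_eq (x : ℝ) :
    stdGaussianPDF x = (Real.sqrt (2 * Real.pi))⁻¹ * Real.exp (-(1/2 : ℝ) * x ^ 2) := by
  unfold stdGaussianPDF; ring_nf

lemma sgp_pos (x : ℝ) : 0 < stdGaussianPDF x :=
  mul_pos (inv_pos.2 (Real.sqrt_pos.2 (by positivity))) (Real.exp_pos _)

lemma sgp_cont : Continuous stdGaussianPDF := by
  unfold stdGaussianPDF; fun_prop

lemma sgp_even (x : ℝ) : stdGaussianPDF (-x) = stdGaussianPDF x := by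
  unfold stdGaussianPDF; rw [neg_pow]; ring_nf

lemma sgp_integrable : Integrable stdGaussianPDF := by
  have h : Integrable (fun x : ℝ => (Real.sqrt (2 * Real.pi))⁻¹ * Real.exp (-(1/2 : ℝ) * x ^ 2)) :=
    (integrable_exp_neg_mul_sq (by norm_num)).const_mul _
  exact h.congr (ae_of_all _ fun x => (sgp_eq x).symm)

lemma sgp_mul_integrable : Integrable (fun t : ℝ => t * stdGaussianPDF t) := by
  have h : Integrable (fun x : ℝ =>
      (Real.sqrt (2 * Real.pi))⁻¹ * (x * Real.exp (-(1/2 : ℝ) * x ^ 2))) :=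
    (integrable_mul_exp_neg_mul_sq (by norm_num)).const_mul _
  refine h.congr (ae_of_all _ fun x => ?_)
  simp only [sgp_eq]; ring

lemma hasDerivAt_sgp (x : ℝ) : HasDerivAt stdGaussianPDF (-(x * stdGaussianPDF x)) x := by
  have h1 : HasDerivAt (fun y : ℝ => -(y ^ 2) / 2) (-x) x := by
    have := ((hasDerivAt_pow 2 x).neg).div_const 2
    exact this.congr_deriv (by norm_num; ring)
  have h2 := (h1.exp).const_mul ((Real.sqrt (2 * Real.pi))⁻¹)
  exact h2.congr_deriv (by unfold stdGaussianPDF; ring)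

lemma hasDerivAt_sgc (x : ℝ) : HasDerivAt stdGaussianCDF (stdGaussianPDF x) x := by
  have key : ∀ u : ℝ, stdGaussianCDF u
      = stdGaussianCDF 0 + ∫ t in (0:ℝ)..u, stdGaussianPDF t := by
    intro u
    rw [← intervalIntegral.integral_Iic_sub_Iic sgp_integrable.integrableOn
      sgp_integrable.integrableOn]
    unfold stdGaussianCDF; ring
  have hd : HasDerivAt (fun u => stdGaussianCDF 0 + ∫ t in (0:ℝ)..u, stdGaussianPDF t)
      (stdGaussianPDF x) x :=
    ((sgp_cont.integral_hasStrictDerivAt 0 x).hasDerivAt).const_add _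
  exact hd.congr_of_eventuallyEq (Filter.Eventually.of_forall fun u => (key u))

lemma sgc_cont : Continuous stdGaussianCDF :=
  continuous_iff_continuousAt.2 fun x => (hasDerivAt_sgc x).continuousAt

lemma sgp_integral : ∫ x, stdGaussianPDF x = 1 := by
  have h := integral_gaussian (1/2 : ℝ)
  have h2 : ∫ x : ℝ, stdGaussianPDF x
      = (Real.sqrt (2 * Real.pi))⁻¹ * ∫ x : ℝ, Real.exp (-(1/2 : ℝ) * x ^ 2) := by
    rw [← integral_const_mul]
    exact integral_congr_ae (ae_of_all _ fun x => sgp_eq x)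
  rw [h2, h, show Real.pi / (1/2 : ℝ) = 2 * Real.pi by ring]
  rw [inv_mul_cancel₀]
  positivity

lemma sgc_pos (x : ℝ) : 0 < stdGaussianCDF x := by
  unfold stdGaussianCDF
  rw [setIntegral_pos_iff_support_of_nonneg_ae
    (ae_of_all _ fun t => (sgp_pos t).le) sgp_integrable.integrableOn]
  have : (Function.support stdGaussianPDF) = Set.univ := by
    ext t; simp [Function.support, (sgp_pos t).ne']
  rw [this, Set.univ_inter]
  simp

lemma sgc_Ioi (x : ℝ) : ∫ t in Set.Ioi x, stdGaussianPDF t = 1 - stdGaussianCDF x := by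
  have h : stdGaussianCDF x + ∫ t in Set.Ioi x, stdGaussianPDF t = 1 := by
    unfold stdGaussianCDF
    rw [← sgp_integral, ← setIntegral_union (Set.Iic_disjoint_Ioi le_rfl) measurableSet_Ioi
      sgp_integrable.integrableOn sgp_integrable.integrableOn, Set.Iic_union_Ioi,
      setIntegral_univ]
  linarith

lemma sgc_lt_one (x : ℝ) : stdGaussianCDF x < 1 := by
  have h := sgc_Ioi x
  have hpos : 0 < ∫ t in Set.Ioi x, stdGaussianPDF t := by
    rw [setIntegral_pos_iff_support_of_nonneg_ae
      (ae_of_all _ fun t => (sgp_pos t).le) sgp_integrable.integrableOn]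
    have : (Function.support stdGaussianPDF) = Set.univ := by
      ext t; simp [Function.support, (sgp_pos t).ne']
    rw [this, Set.univ_inter]
    simp
  linarith

lemma sgc_neg (x : ℝ) : stdGaussianCDF (-x) = 1 - stdGaussianCDF x := by
  have h : stdGaussianCDF (-x) = ∫ t in Set.Iic (-x), stdGaussianPDF (-t) := by
    unfold stdGaussianCDF
    exact setIntegral_congr_fun measurableSet_Iic fun t _ => (sgp_even t).symm
  rw [h, integral_comp_neg_Iic, neg_neg, sgc_Ioi]

lemma sgp_tendsto_atBot : Tendsto stdGaussianPDF atBot (𝓝 0) := by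
  have hsq : Tendsto (fun t : ℝ => t ^ 2) atBot atTop := by
    have h : Tendsto (fun t : ℝ => t ^ 2) atTop atTop := tendsto_pow_atTop (by norm_num)
    have hn : Tendsto (fun t : ℝ => -t) atBot atTop := tendsto_neg_atBot_atTop
    refine (h.comp hn).congr fun t => ?_
    simp [Function.comp]
  have h1 : Tendsto (fun t : ℝ => -(t ^ 2) / 2) atBot atBot :=
    (tendsto_neg_atTop_atBot.comp hsq).atBot_div_const (by norm_num)
  have h2 : Tendsto (fun t : ℝ => Real.exp (-(t ^ 2) / 2)) atBot (𝓝 0) :=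
    Real.tendsto_exp_atBot.comp h1
  have h3 := h2.const_mul ((Real.sqrt (2 * Real.pi))⁻¹)
  rw [mul_zero] at h3
  exact Filter.Tendsto.congr (fun t => rfl) h3

lemma sgp_integral_Iic_mul (x : ℝ) :
    ∫ t in Set.Iic x, t * stdGaussianPDF t = -stdGaussianPDF x := by
  have h := integral_Iic_of_hasDerivAt_of_tendsto' (a := x) (m := 0)
    (f := fun t => -stdGaussianPDF t) (f' := fun t => t * stdGaussianPDF t)
    (fun t _ => (hasDerivAt_sgp t).neg.congr_deriv (by ring))
    sgp_mul_integrable.integrableOn (by simpa using sgp_tendsto_atBot.neg)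
  simpa using h

lemma mills_nonneg (x : ℝ) : 0 ≤ x * stdGaussianCDF x + stdGaussianPDF x := by
  rcases le_or_gt 0 x with hx | hx
  · have h1 := sgc_pos x; have h2 := sgp_pos x; nlinarith
  · have h1 : ∫ t in Set.Iic x, t * stdGaussianPDF t
        ≤ ∫ t in Set.Iic x, x * stdGaussianPDF t := by
      apply setIntegral_mono_on sgp_mul_integrable.integrableOn
        ((sgp_integrable.const_mul x).integrableOn) measurableSet_Iic
      exact fun t ht => mul_le_mul_of_nonneg_right ht (sgp_pos t).le
    rw [sgp_integral_Iic_mul, integral_const_mul] at h1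
    have h2 : -stdGaussianPDF x ≤ x * stdGaussianCDF x := h1
    linarith

lemma mills_aux_pos (x : ℝ) : 0 < x * stdGaussianCDF x + stdGaussianPDF x := by
  have hu : ∀ y : ℝ, HasDerivAt (fun y => y * stdGaussianCDF y + stdGaussianPDF y)
      (stdGaussianCDF y) y := by
    intro y
    have h1 := (hasDerivAt_id y).mul (hasDerivAt_sgc y)
    have h2 := hasDerivAt_sgp y
    exact (h1.add h2).congr_deriv (by simp only [id_eq]; ring)
  have hsm : StrictMono (fun y : ℝ => y * stdGaussianCDF y + stdGaussianPDF y) :=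
    strictMono_of_deriv_pos (fun y => by rw [(hu y).deriv]; exact sgc_pos y)
  have h := hsm (show x - 1 < x by linarith)
  have h0 := mills_nonneg (x - 1)
  simp only at h
  linarith

lemma mills_strictMono : StrictMono (fun x => stdGaussianCDF x / stdGaussianPDF x) := by
  apply strictMono_of_deriv_pos
  intro x
  have hd : HasDerivAt (fun x => stdGaussianCDF x / stdGaussianPDF x)
      ((stdGaussianPDF x * stdGaussianPDF x - stdGaussianCDF x * (-(x * stdGaussianPDF x)))
        / (stdGaussianPDF x) ^ 2) x :=
    (hasDerivAt_sgc x).div (hasDerivAt_sgp x) (ne_of_gt (sgp_pos x))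
  rw [hd.deriv]
  have h1 := mills_aux_pos x
  have h2 := sgp_pos x
  apply div_pos
  · nlinarith
  · positivity

/-- If `a·(1−Φ((t₀−b)/a))/φ((t₀−b)/a) ≤ h(t₀)/h'(t₀)`, then `g(t) = h(t)·Φ((b−t)/a)` is
strictly decreasing on `[t₀, t₁]`, for `h` nonconstant, nondecreasing, concave and
differentiable on `[t₀, t₁]`, `a > 0`. -/
theorem strictAntiOn_of_mills_le (h h' : ℝ → ℝ) (a b t₀ t₁ : ℝ)
    (ht : t₀ < t₁) (ha : 0 < a)
    (hderiv : ∀ t ∈ Set.Icc t₀ t₁, HasDerivWithinAt h (h' t) (Set.Icc t₀ t₁) t)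
    (hmono : MonotoneOn h (Set.Icc t₀ t₁))
    (hconc : ConcaveOn ℝ (Set.Icc t₀ t₁) h)
    (hnonconst : ¬ ∀ s ∈ Set.Icc t₀ t₁, ∀ t ∈ Set.Icc t₀ t₁, h s = h t)
    (hd0 : 0 < h' t₀)
    (hcond : a * (1 - stdGaussianCDF ((t₀ - b) / a)) / stdGaussianPDF ((t₀ - b) / a)
        ≤ h t₀ / h' t₀) :
    StrictAntiOn (fun t => h t * stdGaussianCDF ((b - t) / a)) (Set.Icc t₀ t₁) := by
  clear hnonconst
  have ht₀s : t₀ ∈ Set.Icc t₀ t₁ := ⟨le_rfl, ht.le⟩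
  have hy0 : (t₀ - b) / a = -((b - t₀) / a) := by ring
  have hp0 := sgp_pos ((b - t₀) / a)
  have hc0 := sgc_pos ((b - t₀) / a)
  have hcond' : a * stdGaussianCDF ((b - t₀) / a) * h' t₀
      ≤ h t₀ * stdGaussianPDF ((b - t₀) / a) := by
    rw [hy0, sgc_neg, sgp_even, sub_sub_cancel] at hcond
    exact (div_le_div_iff₀ hp0 hd0).1 hcond
  have hht₀ : 0 < h t₀ := by
    nlinarith [mul_pos (mul_pos ha hc0) hd0]
  apply strictAntiOn_of_deriv_neg (convex_Icc t₀ t₁)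
  · apply ContinuousOn.mul
    · exact fun t htm => (hderiv t htm).continuousWithinAt
    · exact (sgc_cont.comp (by continuity)).continuousOn
  intro t htm
  rw [interior_Icc] at htm
  obtain ⟨ht1, ht2⟩ := htm
  have hts : t ∈ Set.Icc t₀ t₁ := ⟨ht1.le, ht2.le⟩
  have hhd : HasDerivAt h (h' t) t :=
    (hderiv t hts).hasDerivAt (Icc_mem_nhds ht1 ht2)
  have hin : HasDerivAt (fun u : ℝ => (b - u) / a) (-1 / a) t := by
    have h2 := ((hasDerivAt_id t).const_sub b).div_const a
    simpa using h2
  have hcd : HasDerivAt (fun u => stdGaussianCDF ((b - u) / a))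
      (stdGaussianPDF ((b - t) / a) * (-1 / a)) t :=
    HasDerivAt.comp (h₂ := stdGaussianCDF) t (hasDerivAt_sgc ((b - t) / a)) hin
  have hg : HasDerivAt (fun u => h u * stdGaussianCDF ((b - u) / a))
      (h' t * stdGaussianCDF ((b - t) / a)
        + h t * (stdGaussianPDF ((b - t) / a) * (-1 / a))) t := hhd.mul hcd
  rw [hg.deriv]
  have hpt := sgp_pos ((b - t) / a)
  have hct := sgc_pos ((b - t) / a)
  have hht : h t₀ ≤ h t := hmono ht₀s hts ht1.le
  have key : a * h' t * stdGaussianCDF ((b - t) / a) < h t * stdGaussianPDF ((b - t) / a) := by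
    rcases le_or_gt (h' t) 0 with hle | hpos
    · have : a * h' t * stdGaussianCDF ((b - t) / a) ≤ 0 := by
        have := mul_nonpos_of_nonneg_of_nonpos ha.le hle
        exact mul_nonpos_of_nonpos_of_nonneg this hct.le
      nlinarith [mul_pos (lt_of_lt_of_le hht₀ hht) hpt]
    · have h'le : h' t ≤ h' t₀ := by
        have hslope1 : slope h t₀ t ≤ h' t₀ :=
          hconc.slope_le_of_hasDerivWithinAt ht₀s hts ht1 (hderiv t₀ ht₀s)
        have hslope2 : h' t ≤ slope h t₀ t :=
          hconc.le_slope_of_hasDerivWithinAt ht₀s hts ht1 (hderiv t hts)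
        linarith
      have hyy : (b - t) / a < (b - t₀) / a := by
        gcongr <;> linarith
      have hm : stdGaussianCDF ((b - t) / a) / stdGaussianPDF ((b - t) / a)
          < stdGaussianCDF ((b - t₀) / a) / stdGaussianPDF ((b - t₀) / a) :=
        mills_strictMono hyy
      have hA : stdGaussianCDF ((b - t) / a) * stdGaussianPDF ((b - t₀) / a)
          < stdGaussianCDF ((b - t₀) / a) * stdGaussianPDF ((b - t) / a) :=
        (div_lt_div_iff₀ hpt hp0).1 hm
      have s1 : a * h' t₀ * (stdGaussianCDF ((b - t) / a) * stdGaussianPDF ((b - t₀) / a))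
          < a * h' t₀ * (stdGaussianCDF ((b - t₀) / a) * stdGaussianPDF ((b - t) / a)) :=
        mul_lt_mul_of_pos_left hA (by positivity)
      have s2 : (a * stdGaussianCDF ((b - t₀) / a) * h' t₀) * stdGaussianPDF ((b - t) / a)
          ≤ (h t₀ * stdGaussianPDF ((b - t₀) / a)) * stdGaussianPDF ((b - t) / a) :=
        mul_le_mul_of_nonneg_right hcond' hpt.le
      have s3 : h t₀ * (stdGaussianPDF ((b - t₀) / a) * stdGaussianPDF ((b - t) / a))
          ≤ h t * (stdGaussianPDF ((b - t₀) / a) * stdGaussianPDF ((b - t) / a)) :=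
        mul_le_mul_of_nonneg_right hht (by positivity)
      have s4 : (a * h' t₀ * stdGaussianCDF ((b - t) / a)) * stdGaussianPDF ((b - t₀) / a)
          < (h t * stdGaussianPDF ((b - t) / a)) * stdGaussianPDF ((b - t₀) / a) := by
        nlinarith [s1, s2, s3]
      have s5 : a * h' t₀ * stdGaussianCDF ((b - t) / a)
          < h t * stdGaussianPDF ((b - t) / a) :=
        lt_of_mul_lt_mul_right s4 hp0.le
      have s6 : a * h' t * stdGaussianCDF ((b - t) / a)
          ≤ a * h' t₀ * stdGaussianCDF ((b - t) / a) := by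
        apply mul_le_mul_of_nonneg_right _ hct.le
        exact mul_le_mul_of_nonneg_left h'le ha.le
      linarith
  have heq : h' t * stdGaussianCDF ((b - t) / a)
        + h t * (stdGaussianPDF ((b - t) / a) * (-1 / a))
      = (a * h' t * stdGaussianCDF ((b - t) / a) - h t * stdGaussianPDF ((b - t) / a)) / a := by
    field_simp
    ring
  rw [heq]
  exact div_neg_of_neg_of_pos (by linarith) ha
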